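/- Let u₁, u₂ : ℝⁿ → ℝ ∪ {+∞} be lower semicontinuous convex functions, not identically +∞, with bounded effective domains. Then u₁*(y) − u₂*(y) → 0 as |y| → +∞ if and only if: (i) dom(u₁) = dom(u₂); (ii) u₁ = u₂ on the boundary of dom(u₁); and (iii) if U := int dom(u₁) is nonempty, then u₁(x) − u₂(x) → 0 as x ∈ U tends to ∂U. -/

import Mathlib

open Set Filter Topology Bornology Metric
open scoped RealInnerProductSpace
noncomputable section
abbrev En (n : ℕ) := EuclideanSpace ℝ (Fin n)
def legendre {n : ℕ} (u : En n → EReal) (y : En n) : EReal :=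
  ⨆ x : En n, ((⟪x, y⟫ : ℝ) : EReal) - u x

namespace S11
structure Ctx (n : ℕ) where
  u : En n → EReal
  lsc : LowerSemicontinuous u
  conv : Convex ℝ {p : En n × ℝ | u p.1 ≤ (p.2 : EReal)}
  bot : ∀ x, u x ≠ ⊥
  top : {x | u x ≠ ⊤}.Nonempty
  bdd : Bornology.IsBounded {x | u x ≠ ⊤}

variable {n : ℕ} (c : Ctx n)

def Ctx.D : Set (En n) := {x | c.u x ≠ ⊤}
def Ctx.Epi : Set (En n × ℝ) := {p | c.u p.1 ≤ (p.2 : EReal)}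

lemma Ctx.ur_eq {x : En n} (hx : x ∈ c.D) : ((c.u x).toReal : EReal) = c.u x :=
  EReal.coe_toReal hx (c.bot x)

lemma Ctx.mem_epi {x : En n} (hx : x ∈ c.D) : (x, (c.u x).toReal) ∈ c.Epi := by
  simp only [Ctx.Epi, mem_setOf_eq]
  exact le_of_eq (c.ur_eq hx).symm

lemma Ctx.epi_mem_D {p : En n × ℝ} (hp : p ∈ c.Epi) : p.1 ∈ c.D := by
  intro h
  simp only [Ctx.Epi, mem_setOf_eq, h] at hp
  exact (EReal.coe_lt_top p.2).not_ge hp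

lemma Ctx.epi_up {x : En n} {t t' : ℝ} (hp : (x, t) ∈ c.Epi) (h : t ≤ t') : (x, t') ∈ c.Epi :=
  le_trans hp (EReal.coe_le_coe_iff.2 h)

lemma Ctx.convex_D : Convex ℝ c.D := by
  intro x hx y hy a b ha hb hab
  have h1 := c.mem_epi hx
  have h2 := c.mem_epi hy
  have := c.conv h1 h2 ha hb hab
  exact c.epi_mem_D this

lemma Ctx.convex_ineq {x y : En n} (hx : x ∈ c.D) (hy : y ∈ c.D) {a b : ℝ}
    (ha : 0 ≤ a) (hb : 0 ≤ b) (hab : a + b = 1) :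
    c.u (a • x + b • y) ≤ ((a * (c.u x).toReal + b * (c.u y).toReal : ℝ) : EReal) := by
  have := c.conv (c.mem_epi hx) (c.mem_epi hy) ha hb hab
  exact this

lemma Ctx.closed_epi : IsClosed c.Epi := by
  rw [← isOpen_compl_iff]
  rw [isOpen_iff_mem_nhds]
  rintro ⟨x, t⟩ hp
  simp only [Ctx.Epi, mem_compl_iff, mem_setOf_eq, not_le] at hp
  obtain ⟨r, hr1, hr2⟩ := EReal.exists_between_coe_real hp
  have h1 : ∀ᶠ z in 𝓝 x, (r : EReal) < c.u z := c.lsc x r hr2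
  have h2 : ∀ᶠ s in 𝓝 t, (s : ℝ) < r := gt_mem_nhds (EReal.coe_lt_coe_iff.1 hr1)
  rw [nhds_prod_eq (x := x) (y := t)]
  filter_upwards [h1.prod_mk h2] with p hp2
  simp only [Ctx.Epi, mem_compl_iff, mem_setOf_eq, not_le]
  exact lt_trans (EReal.coe_lt_coe_iff.2 hp2.2) hp2.1

/-- Separation of a point from the epigraph, with vertical component negative,
provided the basepoint is in the closure of the domain. -/
lemma Ctx.sep {p : En n × ℝ} (hp : p ∉ c.Epi) (hcl : p.1 ∈ closure c.D) :
    ∃ (y : En n) (s α : ℝ), s < 0 ∧ (∀ q ∈ c.Epi, ⟪q.1, y⟫ + s * q.2 < α) ∧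
      α < ⟪p.1, y⟫ + s * p.2 := by
  obtain ⟨f, α, hf1, hf2⟩ := geometric_hahn_banach_closed_point c.conv c.closed_epi hp
  set y : En n := (InnerProductSpace.toDual ℝ (En n)).symm
    (f.comp (ContinuousLinearMap.inl ℝ (En n) ℝ)) with hy
  set s : ℝ := f (0, 1) with hs
  have hrep : ∀ (z : En n) (t : ℝ), f (z, t) = ⟪z, y⟫ + s * t := by
    intro z t
    have h1 : ⟪z, y⟫ = f (z, 0) := by
      rw [real_inner_comm]
      have := InnerProductSpace.toDual_apply_apply (𝕜 := ℝ) (E := En n)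
        (x := y) (y := z)
      rw [hy] at this ⊢
      simp only [LinearIsometryEquiv.apply_symm_apply] at this
      rw [← this]
      rfl
    have h2 : f (z, t) = f (z, 0) + f (0, t) := by
      rw [← map_add]
      norm_num
    have h3 : f ((0 : En n), t) = t * f (0, 1) := by
      have : ((0 : En n), t) = t • (((0 : En n), (1 : ℝ))) := by
        simp [Prod.smul_mk]
      rw [this, map_smul]
      rfl
    rw [h2, h3, h1, ← hs]; ring
  obtain ⟨x₀, hx₀⟩ := c.top
  have hx₀D : x₀ ∈ c.D := hx₀
  have hsle : s ≤ 0 := by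
    by_contra h
    push_neg at h
    set T : ℝ := max ((c.u x₀).toReal) ((α - ⟪x₀, y⟫) / s + 1) with hT
    have hmem : (x₀, T) ∈ c.Epi := c.epi_up (c.mem_epi hx₀D) (le_max_left _ _)
    have := hf1 _ hmem
    rw [hrep] at this
    have h2 : (α - ⟪x₀, y⟫) / s + 1 ≤ T := le_max_right _ _
    have h3 : α - ⟪x₀, y⟫ + s ≤ s * T := by
      have := mul_le_mul_of_nonneg_left h2 h.le
      calc α - ⟪x₀, y⟫ + s = s * ((α - ⟪x₀, y⟫) / s + 1) := by field_simp
        _ ≤ s * T := this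
    linarith
  have hsne : s ≠ 0 := by
    intro h0
    have hle : ∀ z ∈ c.D, ⟪z, y⟫ < α := by
      intro z hz
      have := hf1 _ (c.mem_epi hz)
      rw [hrep, h0] at this
      linarith
    have hcl2 : ⟪p.1, y⟫ ≤ α := by
      have hclosed : IsClosed {z : En n | ⟪z, y⟫ ≤ α} := by
        have : Continuous fun z : En n => ⟪z, y⟫ := continuous_inner.comp
          (continuous_id.prodMk continuous_const)
        exact isClosed_le this continuous_const
      have : closure c.D ⊆ {z : En n | ⟪z, y⟫ ≤ α} :=
        closure_minimal (fun z hz => (hle z hz).le) hclosed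
      exact this hcl
    have h4 : α < ⟪p.1, y⟫ + s * p.2 := by rw [← hrep]; exact hf2
    rw [h0] at h4
    linarith
  refine ⟨y, s, α, lt_of_le_of_ne hsle hsne, ?_, ?_⟩
  · intro q hq; rw [← hrep]; exact hf1 _ hq
  · rw [← hrep]; exact hf2

lemma ereal_le_of_forall_lt {a : EReal} {b : EReal} (h : ∀ r : ℝ, (r : EReal) < b → (r : EReal) ≤ a) :
    b ≤ a := by
  by_contra hc
  push_neg at hc
  obtain ⟨r, hr1, hr2⟩ := EReal.exists_between_coe_real hc
  exact absurd (h r hr2) (not_le.2 hr1)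

lemma Ctx.minorant : ∃ (y₀ : En n) (cc : ℝ), ∀ x, ((⟪x, y₀⟫ - cc : ℝ) : EReal) ≤ c.u x := by
  obtain ⟨x₀, hx₀⟩ := c.top
  have hx₀D : x₀ ∈ c.D := hx₀
  set p : En n × ℝ := (x₀, (c.u x₀).toReal - 1) with hp
  have hpE : p ∉ c.Epi := by
    simp only [Ctx.Epi, mem_setOf_eq, hp, not_le]
    calc ((((c.u x₀).toReal - 1 : ℝ)) : EReal) < (((c.u x₀).toReal : ℝ) : EReal) := by
          exact_mod_cast sub_one_lt _
      _ = c.u x₀ := c.ur_eq hx₀D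
  obtain ⟨y, s, α, hs, hlt, _⟩ := c.sep hpE (subset_closure hx₀D)
  refine ⟨(-s)⁻¹ • y, α * (-s)⁻¹, fun x => ?_⟩
  by_cases hx : x ∈ c.D
  · have h1 := hlt _ (c.mem_epi hx)
    have hspos : 0 < -s := by linarith
    have h2 : (⟪x, y⟫ - α) / (-s) < (c.u x).toReal := by
      rw [div_lt_iff₀ hspos]
      nlinarith [h1]
    have h3 : ⟪x, (-s)⁻¹ • y⟫ - α * (-s)⁻¹ = (⟪x, y⟫ - α) / (-s) := by
      rw [real_inner_smul_right, div_eq_mul_inv, sub_mul]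
      ring
    calc ((⟪x, (-s)⁻¹ • y⟫ - α * (-s)⁻¹ : ℝ) : EReal) ≤ (((c.u x).toReal : ℝ) : EReal) := by
          exact_mod_cast (h3 ▸ h2.le)
      _ = c.u x := c.ur_eq hx
  · simp only [Ctx.D, mem_setOf_eq, not_not] at hx
    rw [hx]; exact le_top

structure CtxR (n : ℕ) extends Ctx n where
  R : ℝ
  R0 : 0 ≤ R
  hR : ∀ x, u x ≠ ⊤ → ‖x‖ ≤ R
  M : ℝ
  hM : ∀ x, ((-M : ℝ) : EReal) ≤ u x

lemma Ctx.toCtxR : ∃ d : CtxR n, d.toCtx = c := by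
  obtain ⟨R', hR'⟩ := c.bdd.subset_closedBall 0
  obtain ⟨x₀, hx₀⟩ := c.top
  have hR0 : (0 : ℝ) ≤ max R' 0 := le_max_right _ _
  have hRb : ∀ x, c.u x ≠ ⊤ → ‖x‖ ≤ max R' 0 := by
    intro x hx
    have := hR' hx
    rw [Metric.mem_closedBall, dist_zero_right] at this
    exact le_trans this (le_max_left _ _)
  obtain ⟨y₀, cc, hmin⟩ := c.minorant
  refine ⟨⟨c, max R' 0, hR0, hRb, ‖y₀‖ * max R' 0 + cc, fun x => ?_⟩, rfl⟩
  by_cases hx : x ∈ c.D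
  · refine le_trans ?_ (hmin x)
    have h1 : -(‖y₀‖ * max R' 0) ≤ ⟪x, y₀⟫ := by
      have h2 := abs_real_inner_le_norm x y₀
      have h3 := hRb x hx
      have := neg_abs_le (⟪x, y₀⟫)
      nlinarith [norm_nonneg y₀, norm_nonneg x]
    exact_mod_cast (by linarith : -(‖y₀‖ * max R' 0 + cc) ≤ ⟪x, y₀⟫ - cc)
  · simp only [Ctx.D, mem_setOf_eq, not_not] at hx
    rw [hx]; exact le_top

variable (d : CtxR n)

abbrev CtxR.D := d.toCtx.D
abbrev CtxR.Epi := d.toCtx.Epi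

def CtxR.A (y : En n) : Set ℝ := (fun x => ⟪x, y⟫ - (d.u x).toReal) '' d.D

lemma CtxR.A_nonempty (y : En n) : (d.A y).Nonempty := d.top.image _

lemma CtxR.term_le (y : En n) {x : En n} (hx : x ∈ d.D) :
    ⟪x, y⟫ - (d.u x).toReal ≤ d.R * ‖y‖ + d.M := by
  have h1 : ⟪x, y⟫ ≤ d.R * ‖y‖ := by
    have h2 := abs_real_inner_le_norm x y
    have h3 := d.hR x hx
    have := le_abs_self (⟪x, y⟫)
    nlinarith [norm_nonneg y]
  have h4 : -d.M ≤ (d.u x).toReal := by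
    have := d.hM x
    rw [← d.toCtx.ur_eq hx] at this
    exact_mod_cast this
  linarith

lemma CtxR.bddA (y : En n) : BddAbove (d.A y) := by
  refine ⟨d.R * ‖y‖ + d.M, ?_⟩
  rintro r ⟨x, hx, rfl⟩
  exact d.term_le y hx

def CtxR.f (y : En n) : ℝ := sSup (d.A y)

lemma CtxR.le_f {y x : En n} (hx : x ∈ d.D) : ⟪x, y⟫ - (d.u x).toReal ≤ d.f y :=
  le_csSup (d.bddA y) ⟨x, hx, rfl⟩

lemma CtxR.f_le (y : En n) : d.f y ≤ d.R * ‖y‖ + d.M := by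
  apply csSup_le (d.A_nonempty y)
  rintro r ⟨x, hx, rfl⟩
  exact d.term_le y hx

lemma CtxR.exists_near (y : En n) {ε : ℝ} (hε : 0 < ε) :
    ∃ x ∈ d.D, d.f y - ε < ⟪x, y⟫ - (d.u x).toReal := by
  obtain ⟨r, hr, hr2⟩ := exists_lt_of_lt_csSup (d.A_nonempty y)
    (show d.f y - ε < d.f y by linarith)
  obtain ⟨x, hx, rfl⟩ := hr
  exact ⟨x, hx, hr2⟩

lemma CtxR.legendre_eq (y : En n) : legendre d.u y = ((d.f y : ℝ) : EReal) := by
  apply le_antisymm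
  · apply iSup_le
    intro x
    by_cases hx : x ∈ d.D
    · rw [← d.toCtx.ur_eq hx, ← EReal.coe_sub]
      exact_mod_cast d.le_f hx
    · simp only [Ctx.D, mem_setOf_eq, not_not] at hx
      rw [hx, EReal.sub_top]
      exact bot_le
  · apply ereal_le_of_forall_lt
    intro r hr
    have hr' : r < d.f y := by exact_mod_cast hr
    obtain ⟨x, hx, h2⟩ := d.exists_near y (show (0:ℝ) < d.f y - r by linarith)
    have h3 : r < ⟪x, y⟫ - (d.u x).toReal := by linarith
    calc (r : EReal) ≤ ((⟪x, y⟫ - (d.u x).toReal : ℝ) : EReal) := by exact_mod_cast h3.le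
      _ = ((⟪x, y⟫ : ℝ) : EReal) - d.u x := by
          rw [EReal.coe_sub, d.toCtx.ur_eq hx]
      _ ≤ legendre d.u y := le_iSup (fun x => ((⟪x, y⟫ : ℝ) : EReal) - d.u x) x

lemma CtxR.fenchel (x y : En n) : ((⟪x, y⟫ - d.f y : ℝ) : EReal) ≤ d.u x := by
  by_cases hx : x ∈ d.D
  · rw [← d.toCtx.ur_eq hx]
    exact_mod_cast (by linarith [d.le_f (y := y) hx] : ⟪x, y⟫ - d.f y ≤ (d.u x).toReal)
  · simp only [Ctx.D, mem_setOf_eq, not_not] at hx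
    rw [hx]; exact le_top

lemma CtxR.f_lip (y₁ y₂ : En n) : d.f y₁ ≤ d.f y₂ + d.R * ‖y₁ - y₂‖ := by
  apply csSup_le (d.A_nonempty y₁)
  rintro r ⟨x, hx, rfl⟩
  have h1 : ⟪x, y₁⟫ - ⟪x, y₂⟫ ≤ d.R * ‖y₁ - y₂‖ := by
    have h2 : ⟪x, y₁⟫ - ⟪x, y₂⟫ = ⟪x, y₁ - y₂⟫ := by
      rw [inner_sub_right]
    rw [h2]
    have h3 := abs_real_inner_le_norm x (y₁ - y₂)
    have h4 := d.hR x hx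
    have := le_abs_self (⟪x, y₁ - y₂⟫)
    nlinarith [norm_nonneg (y₁ - y₂)]
  have h5 := d.le_f (y := y₂) hx
  simp only
  linarith

lemma CtxR.support_shift {θ : En n} {β : ℝ} (hβ : ∀ z ∈ d.D, ⟪z, θ⟫ ≤ β)
    {s : ℝ} (hs : 0 ≤ s) (y : En n) : d.f (y + s • θ) ≤ d.f y + s * β := by
  apply csSup_le (d.A_nonempty _)
  rintro r ⟨x, hx, rfl⟩
  have h1 : ⟪x, y + s • θ⟫ = ⟪x, y⟫ + s * ⟪x, θ⟫ := by
    rw [inner_add_right, real_inner_smul_right]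
  have h2 : s * ⟪x, θ⟫ ≤ s * β := mul_le_mul_of_nonneg_left (hβ x hx) hs
  have h3 := d.le_f (y := y) hx
  simp only
  rw [h1]
  linarith

lemma dual_repr (g : En n →L[ℝ] ℝ) : ∃ θ : En n, (∀ z, g z = ⟪z, θ⟫) ∧ (g ≠ 0 → θ ≠ 0) := by
  set θ := (InnerProductSpace.toDual ℝ (En n)).symm g with hθ
  have hrep : ∀ z, g z = ⟪z, θ⟫ := by
    intro z
    rw [real_inner_comm]
    have := InnerProductSpace.toDual_apply_apply (𝕜 := ℝ) (E := En n) (x := θ) (y := z)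
    rw [hθ] at this
    simp only [LinearIsometryEquiv.apply_symm_apply] at this
    rw [this]
  refine ⟨θ, hrep, fun hg h0 => hg ?_⟩
  ext z
  rw [hrep z, h0, inner_zero_right]
  rfl

lemma CtxR.FM {x : En n} {r : ℝ} (hr : (r : EReal) < d.u x) :
    ∃ y : En n, r < ⟪x, y⟫ - d.f y := by
  by_cases hcl : x ∈ closure d.D
  · have hpE : (x, r) ∉ d.Epi := by
      simp only [Ctx.Epi, mem_setOf_eq, not_le]
      exact hr
    obtain ⟨y, s, α, hs, hlt, hgt⟩ := d.toCtx.sep hpE hcl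
    have hspos : 0 < -s := by linarith
    refine ⟨(-s)⁻¹ • y, ?_⟩
    have hf : d.f ((-s)⁻¹ • y) ≤ α * (-s)⁻¹ := by
      apply csSup_le (d.A_nonempty _)
      rintro t ⟨z, hz, rfl⟩
      have h1 := hlt _ (d.toCtx.mem_epi hz)
      simp only
      rw [real_inner_smul_right]
      rw [← sub_nonneg]
      have key : α * (-s)⁻¹ - ((-s)⁻¹ * ⟪z, y⟫ - (d.u z).toReal) =
          (α - (⟪z, y⟫ + s * (d.u z).toReal)) * (-s)⁻¹ + (d.u z).toReal * (1 - (-s) * (-s)⁻¹) := by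
        ring
      rw [key, mul_inv_cancel₀ (ne_of_gt hspos)]
      simp only [sub_self, mul_zero, add_zero]
      have h9 : 0 ≤ α - (⟪z, y⟫ + s * (d.u z).toReal) := by linarith [h1]
      have h10 : (0:ℝ) ≤ (-s)⁻¹ := by positivity
      exact mul_nonneg h9 h10
    have h2 : ⟪x, (-s)⁻¹ • y⟫ = (-s)⁻¹ * ⟪x, y⟫ := real_inner_smul_right _ _ _
    have h3 : -s * r < ⟪x, y⟫ - α := by nlinarith [hgt]
    have h4 : r < (⟪x, y⟫ - α) * (-s)⁻¹ := by
      rw [← div_eq_mul_inv, lt_div_iff₀ hspos]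
      nlinarith
    have : (⟪x, y⟫ - α) * (-s)⁻¹ ≤ ⟪x, (-s)⁻¹ • y⟫ - d.f ((-s)⁻¹ • y) := by
      rw [h2]
      nlinarith [hf]
    linarith
  · obtain ⟨g, β, hlt, hgt⟩ := geometric_hahn_banach_closed_point
      (d.toCtx.convex_D.closure) isClosed_closure hcl
    obtain ⟨θ, hθrep, -⟩ := dual_repr g
    rw [hθrep] at hgt
    have hbound : ∀ z ∈ d.D, ⟪z, θ⟫ ≤ β := fun z hz => by
      rw [← hθrep]; exact (hlt z (subset_closure hz)).le
    have hgap : 0 < ⟪x, θ⟫ - β := by linarith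
    set s : ℝ := max 0 ((r + d.f 0) / (⟪x, θ⟫ - β) + 1) with hsd
    have hs0 : 0 ≤ s := le_max_left _ _
    refine ⟨s • θ, ?_⟩
    have h5 : d.f (s • θ) ≤ d.f 0 + s * β := by
      have := d.support_shift hbound hs0 0
      rwa [zero_add] at this
    have h6 : ⟪x, s • θ⟫ = s * ⟪x, θ⟫ := real_inner_smul_right _ _ _
    have h7 : (r + d.f 0) / (⟪x, θ⟫ - β) < s := by
      have := le_max_right 0 ((r + d.f 0) / (⟪x, θ⟫ - β) + 1)
      linarith
    have h8 : r + d.f 0 < s * (⟪x, θ⟫ - β) := by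
      rw [div_lt_iff₀ hgap] at h7
      nlinarith
    rw [h6]
    linarith

section Geometry
variable {s : Set (En n)}

lemma affineSpan_closure_le (s : Set (En n)) :
    closure s ⊆ (affineSpan ℝ s : Set (En n)) :=
  closure_minimal (subset_affineSpan _ _) (affineSpan ℝ s).closed_of_finiteDimensional

lemma interior_closure_convex (hs : Convex ℝ s) : interior (closure s) = interior s := by
  refine subset_antisymm ?_ (interior_mono subset_closure)
  intro z hz
  -- first, interior s is nonempty
  have hsne : s.Nonempty := by
    rcases closure_nonempty_iff.1 ⟨z, interior_subset hz⟩ with h; exact h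
  have hspan : affineSpan ℝ (closure s) = ⊤ :=
    (hs.closure.interior_nonempty_iff_affineSpan_eq_top).1 ⟨z, hz⟩
  have hspan2 : affineSpan ℝ s = ⊤ := by
    have h1 : affineSpan ℝ (closure s) ≤ affineSpan ℝ s :=
      affineSpan_le.2 (affineSpan_closure_le s)
    exact top_le_iff.1 (hspan ▸ h1)
  obtain ⟨w, hw⟩ := hs.interior_nonempty_iff_affineSpan_eq_top.2 hspan2
  by_cases hzw : z = w
  · rwa [hzw]
  obtain ⟨ε, hε, hball⟩ := Metric.isOpen_iff.1 isOpen_interior z hz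
  set t : ℝ := ε / (2 * ‖z - w‖) with ht
  have hzw' : 0 < ‖z - w‖ := by
    rw [norm_pos_iff]; exact sub_ne_zero.2 hzw
  have htpos : 0 < t := by positivity
  set z' : En n := z + t • (z - w) with hz'
  have hz'mem : z' ∈ closure s := by
    apply interior_subset
    apply hball
    rw [Metric.mem_ball, dist_eq_norm]
    have : z' - z = t • (z - w) := by rw [hz']; abel
    rw [this, norm_smul, Real.norm_eq_abs, abs_of_pos htpos, ht]
    rw [div_mul_eq_mul_div]
    have he : ε * ‖z - w‖ / (2 * ‖z - w‖) = ε / 2 := by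
      field_simp
    rw [he]
    linarith
  have hseg : openSegment ℝ w z' ⊆ interior s :=
    hs.openSegment_interior_closure_subset_interior hw hz'mem
  apply hseg
  refine ⟨t / (1 + t), 1 / (1 + t), by positivity, by positivity, ?_, ?_⟩
  · field_simp
    ring
  · rw [hz']
    have h1t : (1 + t) ≠ 0 := by positivity
    have h1t : (1 : ℝ) + t ≠ 0 := by positivity
    match_scalars
    all_goals field_simp
    all_goals ring

lemma closure_interior_convex (hs : Convex ℝ s) (hne : (interior s).Nonempty) :
    closure (interior s) = closure s := by
  refine subset_antisymm (closure_mono interior_subset) ?_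
  intro z hz
  obtain ⟨w, hw⟩ := hne
  have hseg : openSegment ℝ w z ⊆ interior s :=
    hs.openSegment_interior_closure_subset_interior hw hz
  have : z ∈ closure (openSegment ℝ w z) := by
    rw [closure_openSegment]
    exact right_mem_segment ℝ w z
  exact closure_mono hseg this

lemma support_dir (hs : Convex ℝ s) (hsne : s.Nonempty) {x : En n}
    (hx : x ∉ interior (closure s)) :
    ∃ θ : En n, θ ≠ 0 ∧ ∀ z ∈ s, ⟪z, θ⟫ ≤ ⟪x, θ⟫ := by
  rcases eq_empty_or_nonempty (interior (closure s)) with hi | hi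
  · -- degenerate case: affine span is not everything
    have hspan : affineSpan ℝ s ≠ ⊤ := by
      intro h
      obtain ⟨w, hw⟩ := hs.interior_nonempty_iff_affineSpan_eq_top.2 h
      have : w ∈ interior (closure s) := interior_mono subset_closure hw
      rw [hi] at this
      exact this
    obtain ⟨z₀, hz₀⟩ := hsne
    have hdir : (affineSpan ℝ s).direction ≠ ⊤ := by
      intro h
      have hne' : ((affineSpan ℝ s : AffineSubspace ℝ (En n)) : Set (En n)).Nonempty :=
        ⟨z₀, subset_affineSpan ℝ s hz₀⟩
      exact hspan ((AffineSubspace.direction_eq_top_iff_of_nonempty hne').1 h)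
    have horth : ((affineSpan ℝ s).direction)ᗮ ≠ ⊥ := by
      intro h
      exact hdir (Submodule.orthogonal_eq_bot_iff.1 h)
    obtain ⟨θ₀, hθ₀mem, hθ₀ne⟩ := Submodule.exists_mem_ne_zero_of_ne_bot horth
    have hconst : ∀ z ∈ s, ⟪z, θ₀⟫ = ⟪z₀, θ₀⟫ := by
      intro z hz
      have hv : z - z₀ ∈ (affineSpan ℝ s).direction :=
        AffineSubspace.vsub_mem_direction (mem_affineSpan ℝ hz) (mem_affineSpan ℝ hz₀)
      have := hθ₀mem (z - z₀) hv
      rw [real_inner_comm] at this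
      have h2 : ⟪z - z₀, θ₀⟫ = 0 := by
        rw [real_inner_comm]; exact this
      rw [inner_sub_left] at h2
      linarith
    by_cases hsign : ⟪z₀, θ₀⟫ ≤ ⟪x, θ₀⟫
    · exact ⟨θ₀, hθ₀ne, fun z hz => (hconst z hz) ▸ hsign⟩
    · refine ⟨-θ₀, neg_ne_zero.2 hθ₀ne, fun z hz => ?_⟩
      rw [inner_neg_right, inner_neg_right, neg_le_neg_iff]
      rw [hconst z hz]
      linarith
  · obtain ⟨g, hg⟩ := geometric_hahn_banach_open_point (hs.closure.interior) isOpen_interior hx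
    obtain ⟨θ, hθrep, hθne⟩ := dual_repr g
    have hgne : g ≠ 0 := by
      intro h0
      obtain ⟨w, hw⟩ := hi
      have := hg w hw
      rw [h0] at this
      simp at this
    refine ⟨θ, hθne hgne, fun z hz => ?_⟩
    rw [← hθrep, ← hθrep]
    have hzcl : z ∈ closure (interior (closure s)) := by
      rw [closure_interior_convex hs.closure hi, closure_closure]
      exact subset_closure hz
    have hcl : closure (interior (closure s)) ⊆ {v : En n | g v ≤ g x} :=
      closure_minimal (fun v hv => (hg v hv).le) (isClosed_le g.continuous continuous_const)
    exact hcl hzcl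

end Geometry

section Engine
variable {d₁ d₂ : CtxR n}

lemma tendsto_cocompact_of_norm {y : ℕ → En n}
    (h : Tendsto (fun k => ‖y k‖) atTop atTop) : Tendsto y atTop (cocompact (En n)) := by
  rw [← cobounded_eq_cocompact]
  exact tendsto_norm_atTop_iff_cobounded.1 h

lemma norm_add_smul_atTop {y₀ θ : En n} (hθ : θ ≠ 0) :
    Tendsto (fun k : ℕ => ‖y₀ + (k : ℝ) • θ‖) atTop atTop := by
  have hθ0 : 0 < ‖θ‖ := norm_pos_iff.2 hθ
  apply tendsto_atTop_mono (f := fun k : ℕ => (k : ℝ) * ‖θ‖ - ‖y₀‖)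
  · intro k
    have h1 : ‖(k : ℝ) • θ‖ ≤ ‖y₀ + (k : ℝ) • θ‖ + ‖y₀‖ := by
      have h0 := norm_sub_le (y₀ + (k:ℝ) • θ) y₀
      have e : y₀ + (k:ℝ) • θ - y₀ = (k:ℝ) • θ := by abel
      rwa [e] at h0
    rw [norm_smul, Real.norm_eq_abs, abs_of_nonneg (Nat.cast_nonneg k)] at h1
    linarith
  · apply tendsto_atTop_add_const_right
    exact Tendsto.atTop_mul_const hθ0 tendsto_natCast_atTop_atTop

/-- The key engine: if the conjugates' difference tends to zero at infinity, then
`u₂ ≤ u₁` off the interior of the closure of the domain of `u₂`. -/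
lemma engine (hT : Tendsto (fun y => d₁.f y - d₂.f y) (cocompact (En n)) (𝓝 0))
    {x : En n} (hx : x ∉ interior (closure d₂.D)) : d₂.u x ≤ d₁.u x := by
  apply ereal_le_of_forall_lt
  intro r hr
  obtain ⟨r₁, hr₁, hr₂⟩ := EReal.exists_between_coe_real hr
  have hrr : r < r₁ := by exact_mod_cast hr₁
  obtain ⟨y₀, hy₀⟩ := d₂.FM hr₂
  obtain ⟨θ, hθne, hθ⟩ := support_dir d₂.toCtx.convex_D d₂.top hx
  set y : ℕ → En n := fun k => y₀ + (k : ℝ) • θ with hy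
  have hseq : Tendsto y atTop (cocompact (En n)) :=
    tendsto_cocompact_of_norm (norm_add_smul_atTop hθne)
  have h2 : ∀ k : ℕ, r₁ < ⟪x, y k⟫ - d₂.f (y k) := by
    intro k
    have hshift := d₂.support_shift hθ (Nat.cast_nonneg k : (0:ℝ) ≤ (k:ℝ)) y₀
    have hinner : ⟪x, y k⟫ = ⟪x, y₀⟫ + (k : ℝ) * ⟪x, θ⟫ := by
      rw [hy]; simp only [inner_add_right, real_inner_smul_right]
    rw [hinner]
    have : d₂.f (y k) ≤ d₂.f y₀ + (k:ℝ) * ⟪x, θ⟫ := hshift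
    linarith
  have htend : Tendsto (fun k => d₁.f (y k) - d₂.f (y k)) atTop (𝓝 0) := hT.comp hseq
  have hev : ∀ᶠ k in atTop, |d₁.f (y k) - d₂.f (y k)| < r₁ - r := by
    have := Metric.tendsto_nhds.mp htend (r₁ - r) (by linarith)
    simpa [Real.dist_eq] using this
  obtain ⟨k, hk⟩ := hev.exists
  have h3 : r < ⟪x, y k⟫ - d₁.f (y k) := by
    have := h2 k
    have habs := abs_lt.1 hk
    linarith [habs.1, habs.2]
  calc (r : EReal) ≤ ((⟪x, y k⟫ - d₁.f (y k) : ℝ) : EReal) := by exact_mod_cast h3.le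
    _ ≤ d₁.u x := d₁.fenchel x (y k)

end Engine

section Forward
variable {d₁ d₂ : CtxR n}
  (hT : Tendsto (fun y => d₁.f y - d₂.f y) (cocompact (En n)) (𝓝 0))
  (hT' : Tendsto (fun y => d₂.f y - d₁.f y) (cocompact (En n)) (𝓝 0))

include hT hT'

lemma forward_closure_eq : closure d₁.D = closure d₂.D := by
  have h12 : d₁.D ⊆ closure d₂.D := by
    intro x hx
    by_contra hc
    have hc' : x ∉ interior (closure d₂.D) := fun h => hc (interior_subset h)
    have := engine hT hc'
    have hx2 : d₂.u x = ⊤ := by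
      by_contra h2
      exact hc (subset_closure h2)
    rw [hx2, top_le_iff] at this
    exact hx this
  have h21 : d₂.D ⊆ closure d₁.D := by
    intro x hx
    by_contra hc
    have hc' : x ∉ interior (closure d₁.D) := fun h => hc (interior_subset h)
    have := engine hT' hc'
    have hx2 : d₁.u x = ⊤ := by
      by_contra h2
      exact hc (subset_closure h2)
    rw [hx2, top_le_iff] at this
    exact hx this
  exact subset_antisymm (closure_minimal h12 isClosed_closure)
    (closure_minimal h21 isClosed_closure)

lemma forward_eq_off_int {x : En n} (hx : x ∉ interior d₁.D) : d₁.u x = d₂.u x := by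
  have hcl := forward_closure_eq hT hT'
  have h1 : x ∉ interior (closure d₁.D) := by
    rwa [interior_closure_convex d₁.toCtx.convex_D]
  have h2 : x ∉ interior (closure d₂.D) := by rwa [hcl] at h1
  exact le_antisymm (engine hT' h1) (engine hT h2)

lemma forward_D_eq : d₁.D = d₂.D := by
  have hcl := forward_closure_eq hT hT'
  ext x
  by_cases hx : x ∈ interior d₁.D
  · have hx2 : x ∈ interior d₂.D := by
      rw [← interior_closure_convex d₂.toCtx.convex_D, ← hcl,
        interior_closure_convex d₁.toCtx.convex_D]
      exact hx
    simp only [Ctx.D, mem_setOf_eq]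
    constructor
    · intro _; exact interior_subset hx2
    · intro _; exact interior_subset hx
  · have := forward_eq_off_int hT hT' hx
    simp only [Ctx.D, mem_setOf_eq, this]

end Forward

lemma CtxR.f_abs_sub (d : CtxR n) (y₁ y₂ : En n) : |d.f y₁ - d.f y₂| ≤ d.R * ‖y₁ - y₂‖ := by
  rw [abs_sub_le_iff]
  constructor
  · have := d.f_lip y₁ y₂; linarith
  · have := d.f_lip y₂ y₁
    rw [norm_sub_rev] at this
    linarith

lemma CtxR.f_tendsto (d : CtxR n) {y : ℕ → En n} {y₀ : En n}
    (h : Tendsto y atTop (𝓝 y₀)) : Tendsto (fun m => d.f (y m)) atTop (𝓝 (d.f y₀)) := by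
  rw [tendsto_iff_dist_tendsto_zero]
  apply squeeze_zero (fun m => dist_nonneg) (fun m => ?_)
    (g := fun m => d.R * ‖y m - y₀‖)
  · have : Tendsto (fun m => ‖y m - y₀‖) atTop (𝓝 0) := by
      rw [← tendsto_iff_norm_sub_tendsto_zero] at *
      exact h
    have := this.const_mul d.R
    simpa using this
  · rw [Real.dist_eq]
    exact d.f_abs_sub (y m) y₀

section Aux
variable {d₁ d₂ : CtxR n}

/-- Key auxiliary contradiction for the forward direction of (iii). -/
lemma forward_iii_aux
    (hT : Tendsto (fun y => d₁.f y - d₂.f y) (cocompact (En n)) (𝓝 0))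
    (hDeq : d₂.D = d₁.D)
    (hfr : ∀ z, z ∈ closure d₁.D → z ∉ interior d₁.D → d₁.u z = d₂.u z)
    {ε : ℝ} (hε : 0 < ε) {x : ℕ → En n} {xs : En n}
    (hxU : ∀ j, x j ∈ interior d₁.D)
    (hxt : Tendsto x atTop (𝓝 xs))
    (hxscl : xs ∈ closure d₁.D) (hxsni : xs ∉ interior d₁.D)
    (hΔ : ∀ j, ε ≤ (d₁.u (x j)).toReal - (d₂.u (x j)).toReal) : False := by
  have hxD1 : ∀ j, x j ∈ d₁.D := fun j => interior_subset (hxU j)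
  have hxD2 : ∀ j, x j ∈ d₂.D := fun j => hDeq ▸ hxD1 j
  set a : ℕ → ℝ := fun j => (d₁.u (x j)).toReal with ha
  set b : ℕ → ℝ := fun j => (d₂.u (x j)).toReal with hb
  -- choose near-optimal dual points with uniform error ε/2
  have hy : ∀ j, ∃ y : En n, a j - ε/2 < ⟪x j, y⟫ - d₁.f y := by
    intro j
    apply d₁.FM
    rw [← d₁.toCtx.ur_eq (hxD1 j)]
    exact_mod_cast (by linarith : a j - ε/2 < a j)
  choose y hy using hy
  have hfen : ∀ j, ⟪x j, y j⟫ - d₁.f (y j) ≤ a j := by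
    intro j
    have := d₁.fenchel (x j) (y j)
    rw [← d₁.toCtx.ur_eq (hxD1 j)] at this
    exact_mod_cast this
  by_cases hbd : ∃ C : ℝ, ∀ j, ‖y j‖ ≤ C
  · -- bounded dual points: pass to a convergent subsequence
    obtain ⟨C, hC⟩ := hbd
    have hyb : ∀ j, y j ∈ Metric.closedBall (0 : En n) C := by
      intro j; rw [Metric.mem_closedBall, dist_zero_right]; exact hC j
    obtain ⟨ys, -, φ, hφmono, hφt⟩ :=
      tendsto_subseq_of_bounded (Metric.isBounded_closedBall (x := (0:En n)) (r := C)) hyb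
    set L : ℝ := ⟪xs, ys⟫ - d₁.f ys with hL
    have hc : Tendsto (fun m => ⟪x (φ m), y (φ m)⟫ - d₁.f (y (φ m))) atTop (𝓝 L) := by
      apply Tendsto.sub
      · exact Tendsto.inner (hxt.comp hφmono.tendsto_atTop) hφt
      · exact d₁.f_tendsto hφt
    -- u₁ xs ≥ L
    have hu1 : ((L : ℝ) : EReal) ≤ d₁.u xs := by
      have := d₁.fenchel xs ys
      exact_mod_cast this
    -- u₂ xs ≤ L - ε/4
    have hu2 : d₂.u xs ≤ ((L - ε/4 : ℝ) : EReal) := by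
      apply ereal_le_of_forall_lt
      intro q hq
      have hev1 : ∀ᶠ z in 𝓝 xs, (q : EReal) < d₂.u z := d₂.lsc xs q hq
      have hev2 : ∀ᶠ m in atTop, (q : EReal) < d₂.u (x (φ m)) :=
        (hxt.comp hφmono.tendsto_atTop).eventually hev1
      have hev3 : ∀ᶠ m in atTop, ⟪x (φ m), y (φ m)⟫ - d₁.f (y (φ m)) < L + ε/4 :=
        hc.eventually (eventually_lt_nhds (by linarith : L < L + ε/4))
      obtain ⟨m, hm2, hm3⟩ := (hev2.and hev3).exists
      have hqb : q < b (φ m) := by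
        rw [← d₂.toCtx.ur_eq (hxD2 (φ m))] at hm2
        exact_mod_cast hm2
      have hab : b (φ m) ≤ a (φ m) - ε := by have := hΔ (φ m); simp only [ha, hb]; linarith
      have haj : a (φ m) < ⟪x (φ m), y (φ m)⟫ - d₁.f (y (φ m)) + ε/2 := by
        have := hy (φ m); linarith
      have : q < L - ε/4 := by linarith
      exact_mod_cast this.le
    -- but on the frontier u₁ = u₂
    have heq := hfr xs hxscl hxsni
    rw [heq] at hu1
    have : ((L : ℝ) : EReal) ≤ ((L - ε/4 : ℝ) : EReal) := le_trans hu1 hu2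
    have : L ≤ L - ε/4 := by exact_mod_cast this
    linarith
  · -- unbounded dual points: contradiction with hT
    push_neg at hbd
    choose ψ hψ using hbd
    have hψt : Tendsto (fun m : ℕ => ‖y (ψ (m : ℝ))‖) atTop atTop := by
      apply tendsto_atTop_mono (f := fun m : ℕ => (m : ℝ))
      · intro m; exact (hψ (m : ℝ)).le
      · exact tendsto_natCast_atTop_atTop
    have hcc : Tendsto (fun m : ℕ => y (ψ (m : ℝ))) atTop (cocompact (En n)) :=
      tendsto_cocompact_of_norm hψt
    have h0 : Tendsto (fun m : ℕ => d₁.f (y (ψ (m : ℝ))) - d₂.f (y (ψ (m : ℝ)))) atTop (𝓝 0) :=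
      hT.comp hcc
    have hlow : ∀ m : ℕ, ε/2 ≤ d₂.f (y (ψ (m : ℝ))) - d₁.f (y (ψ (m : ℝ))) := by
      intro m
      set j := ψ (m : ℝ)
      have h1 : a j - ε/2 < ⟪x j, y j⟫ - d₁.f (y j) := hy j
      have h2 : ⟪x j, y j⟫ - b j ≤ d₂.f (y j) := by
        have := d₂.le_f (y := y j) (hxD2 j)
        exact this
      have h3 := hΔ j
      simp only [ha, hb] at *
      linarith
    have hev : ∀ᶠ m : ℕ in atTop, |d₁.f (y (ψ (m:ℝ))) - d₂.f (y (ψ (m:ℝ)))| < ε/2 := by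
      have := Metric.tendsto_nhds.mp h0 (ε/2) (by linarith)
      simpa [Real.dist_eq] using this
    obtain ⟨m, hm⟩ := hev.exists
    have := hlow m
    have habs := abs_lt.1 hm
    linarith [habs.1, habs.2]

end Aux

section ForwardIII
variable {d₁ d₂ : CtxR n}

lemma forward_iii
    (hT : Tendsto (fun y => d₁.f y - d₂.f y) (cocompact (En n)) (𝓝 0))
    (hT' : Tendsto (fun y => d₂.f y - d₁.f y) (cocompact (En n)) (𝓝 0)) :
    Tendsto (fun x => (d₁.u x).toReal - (d₂.u x).toReal)
      (𝓝ˢ (frontier (interior d₁.D)) ⊓ 𝓟 (interior d₁.D)) (𝓝 0) := by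
  set U : Set (En n) := interior d₁.D with hU
  set B : Set (En n) := frontier U with hBdef
  set Δ : En n → ℝ := fun x => (d₁.u x).toReal - (d₂.u x).toReal with hΔdef
  rcases eq_empty_or_nonempty B with hB | hB
  · rw [hB, nhdsSet_empty, bot_inf_eq]
    exact tendsto_bot
  by_contra hcon
  rw [Metric.tendsto_nhds] at hcon
  push_neg at hcon
  obtain ⟨ε, hε, hfreq⟩ := hcon
  have hfreq' : ∃ᶠ z in 𝓝ˢ B ⊓ 𝓟 U, ε ≤ |Δ z| := by
    apply hfreq.mono
    intro z hz
    rw [Real.dist_eq, sub_zero] at hz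
    linarith [hz]
  have hDeq : d₂.D = d₁.D := (forward_D_eq hT hT').symm
  have hfr : ∀ z, z ∈ closure d₁.D → z ∉ interior d₁.D → d₁.u z = d₂.u z :=
    fun z _ hz => forward_eq_off_int hT hT' hz
  have hSk : ∀ k : ℕ, ∃ z, (ε ≤ |Δ z|) ∧ z ∈ Metric.thickening (1/(k+1)) B ∩ U := by
    intro k
    have hth : Metric.thickening (1/(k+1)) B ∈ 𝓝ˢ B :=
      (Metric.isOpen_thickening).mem_nhdsSet.2 (Metric.self_subset_thickening (by positivity) B)
    have hmem : Metric.thickening (1/(k+1)) B ∩ U ∈ 𝓝ˢ B ⊓ 𝓟 U :=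
      inter_mem_inf hth (mem_principal_self U)
    exact (hfreq'.and_eventually (eventually_of_mem hmem (fun z hz => hz))).exists
  choose xsq h1 h2 using hSk
  have hxU : ∀ k, xsq k ∈ U := fun k => (h2 k).2
  have hxD : ∀ k, xsq k ∈ d₁.D := fun k => interior_subset (hxU k)
  have hxb : ∀ k, xsq k ∈ Metric.closedBall (0 : En n) d₁.R := by
    intro k
    rw [Metric.mem_closedBall, dist_zero_right]
    exact d₁.hR _ (hxD k)
  obtain ⟨xs, -, φ, hφmono, hφt⟩ :=
    tendsto_subseq_of_bounded (Metric.isBounded_closedBall (x := (0:En n)) (r := d₁.R)) hxb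
  have hxsB : xs ∈ B := by
    have hinf : ∀ m : ℕ, Metric.infDist (xsq (φ m)) B < 1/(m+1) := by
      intro m
      have hthick := (h2 (φ m)).1
      rw [Metric.mem_thickening_iff] at hthick
      obtain ⟨z, hzB, hdz⟩ := hthick
      have h3 := Metric.infDist_le_dist_of_mem (x := xsq (φ m)) hzB
      have h4 : (1 : ℝ)/(φ m + 1) ≤ 1/(m+1) := by
        apply one_div_le_one_div_of_le (by positivity)
        have h6 : (m:ℝ) ≤ (φ m : ℝ) := by exact_mod_cast hφmono.le_apply
        linarith
      linarith
    have htd : Tendsto (fun m : ℕ => Metric.infDist (xsq (φ m)) B) atTop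
        (𝓝 (Metric.infDist xs B)) :=
      ((Metric.continuous_infDist_pt B).continuousAt.tendsto).comp hφt
    have h5 : Tendsto (fun m : ℕ => (1:ℝ)/(m+1)) atTop (𝓝 0) :=
      tendsto_one_div_add_atTop_nhds_zero_nat
    have hle : Metric.infDist xs B ≤ 0 :=
      le_of_tendsto_of_tendsto' htd h5 (fun m => (hinf m).le)
    have : Metric.infDist xs B = 0 := le_antisymm hle (Metric.infDist_nonneg)
    rw [IsClosed.mem_iff_infDist_zero isClosed_frontier hB]
    exact this
  have hxscl : xs ∈ closure d₁.D :=
    (closure_mono (interior_subset : U ⊆ d₁.D)) (frontier_subset_closure hxsB)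
  have hxsni : xs ∉ U := by
    have hop : IsOpen U := isOpen_interior
    rw [hBdef, hop.frontier_eq] at hxsB
    exact hxsB.2
  have hIeq : interior d₂.D = interior d₁.D := by rw [hDeq]
  by_cases hP : ∃ᶠ m in atTop, ε ≤ Δ (xsq (φ m))
  · obtain ⟨ρ, hρ, hρP⟩ := extraction_of_frequently_atTop hP
    exact forward_iii_aux hT hDeq hfr hε (x := fun j => xsq (φ (ρ j))) (xs := xs)
      (fun j => hxU _) (hφt.comp hρ.tendsto_atTop) hxscl hxsni hρP
  · rw [Filter.not_frequently] at hP
    have hQ : ∀ᶠ m in atTop, ε ≤ -(Δ (xsq (φ m))) := by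
      apply hP.mono
      intro m hm
      have habs := h1 (φ m)
      rcases le_abs.1 habs with h | h
      · exact absurd h hm
      · exact h
    obtain ⟨ρ, hρ, hρP⟩ := extraction_of_frequently_atTop hQ.frequently
    have hfr' : ∀ z, z ∈ closure d₂.D → z ∉ interior d₂.D → d₂.u z = d₁.u z := by
      intro z _ hz2
      rw [hIeq] at hz2
      exact (forward_eq_off_int hT hT' hz2).symm
    apply forward_iii_aux (d₁ := d₂) (d₂ := d₁) hT' hDeq.symm hfr' hε
      (x := fun j => xsq (φ (ρ j))) (xs := xs)
      (fun j => hIeq ▸ hxU (φ (ρ j))) (hφt.comp hρ.tendsto_atTop)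
      (by rw [hDeq]; exact hxscl) (by rw [hIeq]; exact hxsni)
    intro j
    have := hρP j
    simp only [hΔdef] at this
    linarith

end ForwardIII

section Backward
variable (d : CtxR n)

lemma CtxR.convexOn_interior : ConvexOn ℝ (interior d.D) (fun x => (d.u x).toReal) := by
  constructor
  · exact d.toCtx.convex_D.interior
  · intro x hx y hy a b ha hb hab
    have hxD : x ∈ d.D := interior_subset hx
    have hyD : y ∈ d.D := interior_subset hy
    have hcombo : a • x + b • y ∈ d.D :=
      d.toCtx.convex_D hxD hyD ha hb hab
    have := d.toCtx.convex_ineq hxD hyD ha hb hab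
    rw [← d.toCtx.ur_eq hcombo] at this
    exact_mod_cast this

lemma CtxR.bddAbove_near {z : En n} (hz : z ∈ interior d.D) :
    ∃ δ : ℝ, 0 < δ ∧ ∃ M' : ℝ, ∀ w ∈ Metric.closedBall z δ,
      w ∈ d.D ∧ (d.u w).toReal ≤ M' := by
  obtain ⟨δ', hδ', hball⟩ := Metric.isOpen_iff.1 isOpen_interior z hz
  have hsub : Metric.closedBall z (δ'/2) ⊆ interior d.D :=
    le_trans (Metric.closedBall_subset_ball (by linarith)) hball
  have hcont : ContinuousOn (fun x => (d.u x).toReal) (interior d.D) :=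
    (d.convexOn_interior).continuousOn isOpen_interior
  obtain ⟨M', hM'⟩ := (isCompact_closedBall z (δ'/2)).exists_bound_of_continuousOn
    (hcont.mono hsub)
  refine ⟨δ'/2, by linarith, M', fun w hw => ?_⟩
  refine ⟨interior_subset (hsub hw), ?_⟩
  have := hM' w hw
  calc (d.u w).toReal ≤ ‖(d.u w).toReal‖ := le_abs_self _
    _ ≤ M' := this

lemma backward_claim {V : Set (En n)} (hV : IsOpen V)
    (hBV : closure d.D \ interior d.D ⊆ V) {ε : ℝ} (hε : 0 < ε) :
    ∃ T : ℝ, ∀ y : En n, T ≤ ‖y‖ → ∀ x ∈ d.D,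
      d.f y - ε ≤ ⟪x, y⟫ - (d.u x).toReal → x ∈ V := by
  by_contra hcon
  push_neg at hcon
  have hseq : ∀ k : ℕ, ∃ (y : En n) (x : En n), (k : ℝ) ≤ ‖y‖ ∧ x ∈ d.D ∧
      d.f y - ε ≤ ⟪x, y⟫ - (d.u x).toReal ∧ x ∉ V := by
    intro k
    obtain ⟨y, hy, x, hx1, hx2, hx3⟩ := hcon (k : ℝ)
    exact ⟨y, x, hy, hx1, hx2, hx3⟩
  choose ys xsq hys hxD hnear hxV using hseq
  have hxb : ∀ k, xsq k ∈ Metric.closedBall (0 : En n) d.R := by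
    intro k
    rw [Metric.mem_closedBall, dist_zero_right]
    exact d.hR _ (hxD k)
  obtain ⟨xi, -, φ, hφmono, hφt⟩ :=
    tendsto_subseq_of_bounded (Metric.isBounded_closedBall (x := (0:En n)) (r := d.R)) hxb
  have hxiV : xi ∉ V := by
    have hclosed : IsClosed Vᶜ := hV.isClosed_compl
    have : ∀ m, (xsq ∘ φ) m ∈ Vᶜ := fun m => hxV (φ m)
    exact hclosed.mem_of_tendsto hφt (Filter.Eventually.of_forall this)
  have hxicl : xi ∈ closure d.D := by
    have : ∀ m, (xsq ∘ φ) m ∈ d.D := fun m => hxD (φ m)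
    exact (isClosed_closure (s := d.D)).mem_of_tendsto hφt
      (Filter.Eventually.of_forall (fun m => subset_closure (this m)))
  have hxiint : xi ∈ interior d.D := by
    by_contra hc
    exact hxiV (hBV ⟨hxicl, hc⟩)
  obtain ⟨δ, hδ, M', hM'⟩ := d.bddAbove_near hxiint
  -- lower bound for u on D
  have hlb : ∀ x ∈ d.D, -d.M ≤ (d.u x).toReal := by
    intro x hx
    have := d.hM x
    rw [← d.toCtx.ur_eq hx] at this
    exact_mod_cast this
  -- choose a large index
  obtain ⟨m₀, hm₀⟩ := exists_nat_gt ((d.M + M' + ε) / (δ/2))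
  have hev : ∀ᶠ m : ℕ in atTop, ‖(xsq ∘ φ) m - xi‖ ≤ δ/2 := by
    have := (tendsto_iff_norm_sub_tendsto_zero.1 hφt)
    have h2 := Metric.tendsto_nhds.mp (by simpa using this) (δ/2) (by linarith)
    apply h2.mono
    intro m hm
    rw [Real.dist_eq, sub_zero] at hm
    calc ‖(xsq ∘ φ) m - xi‖ = |‖(xsq ∘ φ) m - xi‖| := (abs_of_nonneg (norm_nonneg _)).symm
      _ ≤ δ/2 := hm.le
  obtain ⟨m, hm1, hm2⟩ := ((eventually_ge_atTop (max m₀ 1)).and hev).exists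
  set k := φ m with hk
  set y := ys k with hyk
  have hyn : (max m₀ 1 : ℝ) ≤ ‖y‖ := by
    have h3 : (k : ℝ) ≤ ‖y‖ := hys k
    have h4 : (max m₀ 1 : ℕ) ≤ k := le_trans hm1 hφmono.le_apply
    have h5 : ((m₀:ℝ) ⊔ 1) ≤ (k:ℝ) := by exact_mod_cast h4
    linarith
  have hy1 : (1:ℝ) ≤ ‖y‖ := by
    have : ((1:ℕ):ℝ) ≤ ((max m₀ 1 : ℕ) : ℝ) := by exact_mod_cast le_max_right m₀ 1
    push_cast at this ⊢
    linarith
  have hyne : ‖y‖ ≠ 0 := by linarith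
  -- the probe point
  set w : En n := xi + (δ * ‖y‖⁻¹) • y with hw
  have hwball : w ∈ Metric.closedBall xi δ := by
    rw [Metric.mem_closedBall, dist_eq_norm]
    have : w - xi = (δ * ‖y‖⁻¹) • y := by rw [hw]; abel
    rw [this, norm_smul, Real.norm_eq_abs, abs_of_pos (by positivity)]
    rw [mul_assoc, inv_mul_cancel₀ hyne, mul_one]
  obtain ⟨hwD, hwM⟩ := hM' w hwball
  have hfw : ⟪w, y⟫ - (d.u w).toReal ≤ d.f y := d.le_f hwD
  have hinw : ⟪w, y⟫ = ⟪xi, y⟫ + δ * ‖y‖ := by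
    rw [hw, inner_add_left, real_inner_smul_left]
    rw [real_inner_self_eq_norm_sq]
    field_simp
  have hnear' := hnear k
  have hupper : (d.u (xsq k)).toReal ≤ ⟪xsq k - xi, y⟫ - δ * ‖y‖ + M' + ε := by
    have h5 : ⟪xi, y⟫ + δ * ‖y‖ - M' ≤ d.f y := by
      rw [← hinw]
      linarith [hfw, hwM]
    have h6 : ⟪xsq k - xi, y⟫ = ⟪xsq k, y⟫ - ⟪xi, y⟫ := by rw [inner_sub_left]
    linarith [hnear']
  have hcs : ⟪xsq k - xi, y⟫ ≤ (δ/2) * ‖y‖ := by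
    have h7 := real_inner_le_norm (xsq k - xi) y
    have h8 : ‖xsq k - xi‖ ≤ δ/2 := hm2
    nlinarith [norm_nonneg y]
  have hfinal : (d.u (xsq k)).toReal ≤ -(δ/2) * ‖y‖ + M' + ε := by nlinarith
  have hlow := hlb (xsq k) (hxD k)
  have hbig : (m₀ : ℝ) ≤ ‖y‖ := le_trans (le_max_left _ _) hyn
  have h9 : (d.M + M' + ε) < (δ/2) * ‖y‖ := by
    have h10 : (d.M + M' + ε) < (δ/2) * (m₀ : ℝ) := by
      rw [div_lt_iff₀ (by positivity : (0:ℝ) < δ/2)] at hm₀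
      linarith
    nlinarith
  linarith

end Backward

section BackwardMain
variable {d₁ d₂ : CtxR n}

lemma backward (hD : d₁.D = d₂.D)
    (hfr : ∀ x ∈ frontier d₁.D, d₁.u x = d₂.u x)
    (hiii : (interior d₁.D).Nonempty →
      Tendsto (fun x => (d₁.u x).toReal - (d₂.u x).toReal)
        (𝓝ˢ (frontier (interior d₁.D)) ⊓ 𝓟 (interior d₁.D)) (𝓝 0)) :
    Tendsto (fun y => d₁.f y - d₂.f y) (cocompact (En n)) (𝓝 0) := by
  rcases eq_empty_or_nonempty (interior d₁.D) with hne | hne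
  · -- degenerate case : `u₁ = u₂` everywhere
    have hUeq : ∀ x, d₁.u x = d₂.u x := by
      intro x
      by_cases hx : x ∈ d₁.D
      · refine hfr x ⟨subset_closure hx, ?_⟩
        rw [hne]
        exact notMem_empty x
      · have hx2 : x ∉ d₂.D := hD ▸ hx
        simp only [Ctx.D, mem_setOf_eq, not_not] at hx hx2
        rw [hx, hx2]
    have hfeq : ∀ y, d₁.f y = d₂.f y := by
      intro y
      have h1 : (fun x : En n => ⟪x, y⟫ - (d₁.u x).toReal) =
          (fun x : En n => ⟪x, y⟫ - (d₂.u x).toReal) := by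
        funext x; rw [hUeq x]
      have h2 : d₁.D = d₂.D := hD
      unfold CtxR.f CtxR.A
      rw [h1]
      unfold CtxR.D
      rw [show d₁.toCtx.D = d₂.toCtx.D from h2]
    have : (fun y => d₁.f y - d₂.f y) = fun _ => (0:ℝ) := by
      funext y; rw [hfeq y]; ring
    rw [this]
    exact tendsto_const_nhds
  · rw [Metric.tendsto_nhds]
    intro ε hε
    have hiii' := hiii hne
    have hsmall : {z : En n | |((d₁.u z).toReal - (d₂.u z).toReal)| < ε/4} ∈
        𝓝ˢ (frontier (interior d₁.D)) ⊓ 𝓟 (interior d₁.D) := by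
      have := Metric.tendsto_nhds.mp hiii' (ε/4) (by linarith)
      apply this.mono
      intro z hz
      rwa [Real.dist_eq, sub_zero] at hz
    obtain ⟨S, hS, T', hT', hST⟩ := Filter.mem_inf_iff.1 hsmall
    obtain ⟨V, hVopen, hBV, hVS⟩ := mem_nhdsSet_iff_exists.1 hS
    have hUT' : interior d₁.D ⊆ T' := mem_principal.1 hT'
    have hVE : ∀ z ∈ V, z ∈ interior d₁.D →
        |((d₁.u z).toReal - (d₂.u z).toReal)| < ε/4 := by
      intro z hzV hzU
      have : z ∈ S ∩ T' := ⟨hVS hzV, hUT' hzU⟩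
      rw [← hST] at this
      exact this
    -- the frontier of the interior is the closure minus the interior
    have hfr_eq : frontier (interior d₁.D) = closure d₁.D \ interior d₁.D := by
      rw [(isOpen_interior : IsOpen (interior d₁.D)).frontier_eq,
        closure_interior_convex d₁.toCtx.convex_D hne]
    have hBV₁ : closure d₁.D \ interior d₁.D ⊆ V := by
      rw [← hfr_eq]; exact hBV
    have hBV₂ : closure d₂.D \ interior d₂.D ⊆ V := by
      rw [← hD]; exact hBV₁
    obtain ⟨T₁, hT₁⟩ := backward_claim d₁ hVopen hBV₁ (show (0:ℝ) < ε/4 by linarith)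
    obtain ⟨T₂, hT₂⟩ := backward_claim d₂ hVopen hBV₂ (show (0:ℝ) < ε/4 by linarith)
    have hmem : {y : En n | max T₁ T₂ ≤ ‖y‖} ∈ cocompact (En n) := by
      rw [← cobounded_eq_cocompact]
      exact eventually_cobounded_le_norm (max T₁ T₂)
    filter_upwards [hmem] with y hy
    rw [Real.dist_eq, sub_zero, abs_sub_lt_iff]
    have half1 : d₁.f y - d₂.f y < ε/2 := by
      obtain ⟨x, hxD, hnear⟩ := d₁.exists_near y (show (0:ℝ) < ε/4 by linarith)
      have hxV : x ∈ V := hT₁ y (le_trans (le_max_left _ _) hy) x hxD hnear.le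
      have hf₂ : ⟪x, y⟫ - (d₂.u x).toReal ≤ d₂.f y := d₂.le_f (hD ▸ hxD)
      by_cases hxint : x ∈ interior d₁.D
      · have := hVE x hxV hxint
        have habs := abs_lt.1 this
        linarith [habs.1]
      · have hxfr : x ∈ frontier d₁.D := ⟨subset_closure hxD, hxint⟩
        have heq := hfr x hxfr
        have : (d₁.u x).toReal = (d₂.u x).toReal := by rw [heq]
        linarith
    have half2 : d₂.f y - d₁.f y < ε/2 := by
      obtain ⟨x, hxD, hnear⟩ := d₂.exists_near y (show (0:ℝ) < ε/4 by linarith)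
      have hxV : x ∈ V := hT₂ y (le_trans (le_max_right _ _) hy) x hxD hnear.le
      have hxD₁ : x ∈ d₁.D := hD ▸ hxD
      have hf₁ : ⟪x, y⟫ - (d₁.u x).toReal ≤ d₁.f y := d₁.le_f hxD₁
      by_cases hxint : x ∈ interior d₁.D
      · have := hVE x hxV hxint
        have habs := abs_lt.1 this
        linarith [habs.2]
      · have hxfr : x ∈ frontier d₁.D := ⟨subset_closure hxD₁, hxint⟩
        have heq := hfr x hxfr
        have : (d₁.u x).toReal = (d₂.u x).toReal := by rw [heq]
        linarith
    exact ⟨by linarith, by linarith⟩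

end BackwardMain

end S11

open S11 in
theorem stmt11 {n : ℕ} (u₁ u₂ : En n → EReal)
    (hlsc₁ : LowerSemicontinuous u₁)
    (hconv₁ : Convex ℝ {p : En n × ℝ | u₁ p.1 ≤ (p.2 : EReal)})
    (hbot₁ : ∀ x, u₁ x ≠ ⊥) (htop₁ : {x | u₁ x ≠ ⊤}.Nonempty)
    (hdb₁ : Bornology.IsBounded {x | u₁ x ≠ ⊤})
    (hlsc₂ : LowerSemicontinuous u₂)
    (hconv₂ : Convex ℝ {p : En n × ℝ | u₂ p.1 ≤ (p.2 : EReal)})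
    (hbot₂ : ∀ x, u₂ x ≠ ⊥) (htop₂ : {x | u₂ x ≠ ⊤}.Nonempty)
    (hdb₂ : Bornology.IsBounded {x | u₂ x ≠ ⊤}) :
    Tendsto (fun y => (legendre u₁ y).toReal - (legendre u₂ y).toReal)
        (cocompact (En n)) (𝓝 0) ↔
      ({x | u₁ x ≠ ⊤} = {x | u₂ x ≠ ⊤} ∧
       (∀ x ∈ frontier {x | u₁ x ≠ ⊤}, u₁ x = u₂ x) ∧
       ((interior {x | u₁ x ≠ ⊤}).Nonempty →
         Tendsto (fun x => (u₁ x).toReal - (u₂ x).toReal)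
           (𝓝ˢ (frontier (interior {x | u₁ x ≠ ⊤})) ⊓
             Filter.principal (interior {x | u₁ x ≠ ⊤})) (𝓝 0))) := by
  obtain ⟨d₁, hd₁⟩ := (Ctx.mk u₁ hlsc₁ hconv₁ hbot₁ htop₁ hdb₁).toCtxR
  obtain ⟨d₂, hd₂⟩ := (Ctx.mk u₂ hlsc₂ hconv₂ hbot₂ htop₂ hdb₂).toCtxR
  have hu₁ : d₁.u = u₁ := congrArg Ctx.u hd₁
  have hu₂ : d₂.u = u₂ := congrArg Ctx.u hd₂
  rw [← hu₁, ← hu₂]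
  have hD₁ : {x | d₁.u x ≠ ⊤} = d₁.D := rfl
  have hD₂ : {x | d₂.u x ≠ ⊤} = d₂.D := rfl
  rw [hD₁, hD₂]
  have hco₁ : ∀ y, (legendre d₁.u y).toReal = d₁.f y := fun y => by
    rw [d₁.legendre_eq y]; exact EReal.toReal_coe _
  have hco₂ : ∀ y, (legendre d₂.u y).toReal = d₂.f y := fun y => by
    rw [d₂.legendre_eq y]; exact EReal.toReal_coe _
  have hLHS : (fun y => (legendre d₁.u y).toReal - (legendre d₂.u y).toReal) =
      fun y => d₁.f y - d₂.f y := by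
    funext y; rw [hco₁ y, hco₂ y]
  rw [hLHS]
  constructor
  · intro hT
    have hT' : Tendsto (fun y => d₂.f y - d₁.f y) (cocompact (En n)) (𝓝 0) := by
      have := hT.neg
      rw [neg_zero] at this
      convert this using 2 with y
      ring
    refine ⟨forward_D_eq hT hT', fun x hx => forward_eq_off_int hT hT' hx.2, ?_⟩
    intro hne
    exact forward_iii hT hT'
  · rintro ⟨h1, h2, h3⟩
    exact backward h1 h2 h3
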